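/- arXiv:1503.05776 — 3 statements merged into one kernel-verified Lean document; each statement's English description precedes it below -/
import Mathlib

section
/- Let K be an algebraically closed field of characteristic 0 and let s(x,y) = c_4 x^4 + c_3 x^3 y + c_2 x^2 y^2 + c_1 x y^3 + c_0 y^4 be a binary quartic form over K. Then s is the square of a binary quadratic form if and only if the point (c_0, c_1, c_2, c_3, c_4) satisfies the seven cubic equations: 8X_1X_4^2 − 4X_2X_3X_4 + X_3^3 = 0, 16X_0X_4^2 + 2X_1X_3X_4 − 4X_2^2X_4 + X_2X_3^2 = 0, 8X_0X_3X_4 − 4X_1X_2X_4 + X_1X_3^2 = 0, X_0X_3^2 − X_1^2X_4 = 0, 8X_0X_1X_4 − 4X_0X_2X_3 + X_1^2X_3 = 0, 16X_0^2X_4 + 2X_0X_1X_3 − 4X_0X_2^2 + X_1^2X_2 = 0, and 8X_0^2X_3 − 4X_0X_1X_2 + X_1^3 = 0. -/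
open MvPolynomial

private lemma stmt2.key {K : Type*} [CommRing K] (a b d : K) (c : Fin 5 → K)
    (h4 : c 4 = a^2) (h3 : c 3 = 2*a*b) (h2 : c 2 = b^2+2*a*d)
    (h1 : c 1 = 2*b*d) (h0 : c 0 = d^2) :
    ∃ q : MvPolynomial (Fin 2) K, q.IsHomogeneous 2 ∧
        (C (c 4) * X 0 ^ 4 + C (c 3) * X 0 ^ 3 * X 1 + C (c 2) * X 0 ^ 2 * X 1 ^ 2 +
          C (c 1) * X 0 * X 1 ^ 3 + C (c 0) * X 1 ^ 4) = q ^ 2 := by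
  refine ⟨C a * X 0 ^ 2 + C b * (X 0 * X 1) + C d * X 1 ^ 2, ?_, ?_⟩
  · apply IsHomogeneous.add
    apply IsHomogeneous.add
    · exact (isHomogeneous_C _ _).mul ((isHomogeneous_X _ _).pow 2)
    · exact (isHomogeneous_C _ _).mul ((isHomogeneous_X _ _).mul (isHomogeneous_X _ _))
    · exact (isHomogeneous_C _ _).mul ((isHomogeneous_X _ _).pow 2)
  · rw [h4, h3, h2, h1, h0]
    simp only [map_pow, map_mul, map_add, map_ofNat]
    ring

set_option maxRecDepth 8000 in
private lemma stmt2.fwd {K : Type*} [Field K] (c : Fin 5 → K)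
    (q : MvPolynomial (Fin 2) K)
    (heq : (C (c 4) * X 0 ^ 4 + C (c 3) * X 0 ^ 3 * X 1 + C (c 2) * X 0 ^ 2 * X 1 ^ 2 +
          C (c 1) * X 0 * X 1 ^ 3 + C (c 0) * X 1 ^ 4) = q ^ 2) :
    ∃ a b d : K, c 4 = a^2 ∧ c 3 = 2*a*b ∧ c 2 = b^2+2*a*d ∧ c 1 = 2*b*d ∧ c 0 = d^2 := by
  classical
  set φ : MvPolynomial (Fin 2) K →+* Polynomial K :=
    eval₂Hom Polynomial.C ![1, Polynomial.X] with hφ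
  have hg2 : Polynomial.C (c 4) + Polynomial.C (c 3) * Polynomial.X +
      Polynomial.C (c 2) * Polynomial.X ^ 2 + Polynomial.C (c 1) * Polynomial.X ^ 3 +
      Polynomial.C (c 0) * Polynomial.X ^ 4 = (φ q) ^ 2 := by
    have := congrArg φ heq
    simp only [hφ, map_add, map_mul, map_pow, eval₂Hom_C, eval₂Hom_X',
      Matrix.cons_val_zero, Matrix.cons_val_one, Matrix.head_cons, one_pow, mul_one,
      one_mul] at this
    exact this
  set g := φ q with hg
  have hdeg4 : (Polynomial.C (c 4) + Polynomial.C (c 3) * Polynomial.X +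
      Polynomial.C (c 2) * Polynomial.X ^ 2 + Polynomial.C (c 1) * Polynomial.X ^ 3 +
      Polynomial.C (c 0) * Polynomial.X ^ 4).natDegree ≤ 4 := by compute_degree
  have hdegg : g.natDegree ≤ 2 := by
    rw [hg2, Polynomial.natDegree_pow] at hdeg4; omega
  have hgeq : g = Polynomial.C (g.coeff 0) + Polynomial.C (g.coeff 1) * Polynomial.X +
      Polynomial.C (g.coeff 2) * Polynomial.X ^ 2 := by
    ext n
    match n with
    | 0 => simp
    | 1 => simp
    | 2 => simp [Polynomial.coeff_X_pow]
    | (m+3) =>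
      rw [Polynomial.coeff_eq_zero_of_natDegree_lt (by omega)]
      simp [Polynomial.coeff_X_pow, Polynomial.coeff_C]
  rw [hgeq] at hg2
  have h2 : (Polynomial.C (g.coeff 0) + Polynomial.C (g.coeff 1) * Polynomial.X +
      Polynomial.C (g.coeff 2) * Polynomial.X ^ 2) ^ 2 =
      Polynomial.C ((g.coeff 0)^2) + Polynomial.C (2 * g.coeff 0 * g.coeff 1) * Polynomial.X +
      Polynomial.C ((g.coeff 1)^2 + 2 * g.coeff 0 * g.coeff 2) * Polynomial.X ^ 2 +
      Polynomial.C (2 * g.coeff 1 * g.coeff 2) * Polynomial.X ^ 3 +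
      Polynomial.C ((g.coeff 2)^2) * Polynomial.X ^ 4 := by
    simp only [map_pow, map_mul, map_add, map_ofNat]; ring
  rw [h2] at hg2
  have e := fun k => congrArg (fun p => Polynomial.coeff p k) hg2
  simp only [Polynomial.coeff_add, Polynomial.coeff_C_mul, Polynomial.coeff_C,
    Polynomial.coeff_X_pow, Polynomial.coeff_X] at e
  refine ⟨g.coeff 0, g.coeff 1, g.coeff 2, ?_, ?_, ?_, ?_, ?_⟩
  · simpa using e 0
  · simpa using e 1
  · simpa using e 2
  · simpa using e 3
  · simpa using e 4

/-- Over an algebraically closed field `K` of characteristic 0,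
the binary quartic `s(x,y) = c₄x⁴ + c₃x³y + c₂x²y² + c₁xy³ + c₀y⁴` is the
square of a binary quadratic form if and only if `(c₀,…,c₄)` satisfies the
seven listed cubic equations. -/
theorem stmt2 {K : Type*} [Field K] [IsAlgClosed K] [CharZero K] (c : Fin 5 → K) :
    (∃ q : MvPolynomial (Fin 2) K, q.IsHomogeneous 2 ∧
        (C (c 4) * X 0 ^ 4 + C (c 3) * X 0 ^ 3 * X 1 + C (c 2) * X 0 ^ 2 * X 1 ^ 2 +
          C (c 1) * X 0 * X 1 ^ 3 + C (c 0) * X 1 ^ 4) = q ^ 2) ↔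
      (8 * c 1 * c 4 ^ 2 - 4 * c 2 * c 3 * c 4 + c 3 ^ 3 = 0 ∧
       16 * c 0 * c 4 ^ 2 + 2 * c 1 * c 3 * c 4 - 4 * c 2 ^ 2 * c 4 + c 2 * c 3 ^ 2 = 0 ∧
       8 * c 0 * c 3 * c 4 - 4 * c 1 * c 2 * c 4 + c 1 * c 3 ^ 2 = 0 ∧
       c 0 * c 3 ^ 2 - c 1 ^ 2 * c 4 = 0 ∧
       8 * c 0 * c 1 * c 4 - 4 * c 0 * c 2 * c 3 + c 1 ^ 2 * c 3 = 0 ∧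
       16 * c 0 ^ 2 * c 4 + 2 * c 0 * c 1 * c 3 - 4 * c 0 * c 2 ^ 2 + c 1 ^ 2 * c 2 = 0 ∧
       8 * c 0 ^ 2 * c 3 - 4 * c 0 * c 1 * c 2 + c 1 ^ 3 = 0) := by
  constructor
  · rintro ⟨q, -, heq⟩
    obtain ⟨a, b, d, h4, h3, h2, h1, h0⟩ := stmt2.fwd c q heq
    rw [h4, h3, h2, h1, h0]
    refine ⟨by ring, by ring, by ring, by ring, by ring, by ring, by ring⟩
  · rintro ⟨h1, h2, h3, h4, h5, h6, h7⟩
    by_cases hc4 : c 4 ≠ 0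
    · obtain ⟨a, ha⟩ := IsAlgClosed.exists_pow_nat_eq (c 4) zero_lt_two
      have ha0 : a ≠ 0 := by rintro rfl; simp at ha; exact hc4 ha.symm
      refine stmt2.key a (c 3 / (2*a)) ((c 2 - (c 3 / (2*a))^2) / (2*a)) c
        ha.symm (by field_simp) (by field_simp; ring) ?_ ?_
      · field_simp
        linear_combination (8*(c 1)*(a^2 + c 4) - 4*(c 2)*(c 3)) * ha + h1
      · field_simp
        linear_combination (64*(c 0)*(a^4 + a^2*(c 4) + (c 4)^2)
            - 16*(c 2)^2*(a^2 + (c 4)) + 8*(c 2)*(c 3)^2) * ha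
          + 4*(c 4)*h2 - (c 3)*h1
    · push_neg at hc4
      have hc3 : c 3 = 0 := by
        have : c 3 ^ 3 = 0 := by
          linear_combination h1 + (4*(c 2)*(c 3) - 8*(c 1)*(c 4))*hc4
        exact pow_eq_zero_iff (n := 3) (by norm_num) |>.mp this
      by_cases hc2 : c 2 ≠ 0
      · obtain ⟨e, he⟩ := IsAlgClosed.exists_pow_nat_eq (c 2) zero_lt_two
        have he0 : e ≠ 0 := by rintro rfl; simp at he; exact hc2 he.symm
        refine stmt2.key 0 e (c 1 / (2*e)) c (by rw [hc4]; ring) (by rw [hc3]; ring)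
          (by rw [← he]; ring) (by field_simp) ?_
        · have h6' : c 2 * (c 1 ^ 2 - 4 * c 0 * c 2) = 0 := by
            linear_combination h6 - 16*(c 0)^2*hc4 - 2*(c 0)*(c 1)*hc3
          have h6'' : c 1 ^ 2 - 4 * c 0 * c 2 = 0 :=
            (mul_eq_zero.mp h6').resolve_left hc2
          field_simp
          linear_combination 4*(c 0)*he - h6''
      · push_neg at hc2
        have hc1 : c 1 = 0 := by
          have : c 1 ^ 3 = 0 := by
            linear_combination h7 - 8*(c 0)^2*hc3 + 4*(c 0)*(c 1)*hc2
          exact pow_eq_zero_iff (n := 3) (by norm_num) |>.mp this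
        obtain ⟨f, hf⟩ := IsAlgClosed.exists_pow_nat_eq (c 0) zero_lt_two
        exact stmt2.key 0 0 f c (by rw [hc4]; ring) (by rw [hc3]; ring)
          (by rw [hc2]; ring) (by rw [hc1]; ring) (by rw [← hf])
end

section
/- Let K = ℂ{{t}} with valuation val, and let (A, B) ∈ K^2 be a bitangent coefficient pair of a symmetric plane quartic (i.e., one invariant under permuting x, y, z) such that val(A) = val(B) = −a for some a ≥ 2, and suppose additionally that val(A + B) > −a. If every bitangent pair (A', B') of the curve satisfies val(A'/B' + 1/B' + 1) ≤ 0, then we reach a contradiction; hence val(A + B) = −a. -/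
/-- Let `K = ℂ{{t}}` (or any field) with a nonarchimedean
valuation `v`, and let `(A, B)` be a bitangent coefficient pair of a symmetric
plane quartic with `v A = v B = −a` for some `a ≥ 2`.  By symmetry, `(A/B, 1/B)`
is also a bitangent pair; assuming the bound `v (A/B + 1/B + 1) ≤ 0` satisfied
by all bitangent pairs, the assumption `v (A + B) > −a` (or `A + B = 0`) leads
to a contradiction; hence `A + B ≠ 0` and `v (A + B) = −a`. -/
theorem stmt17 {K : Type*} [Field K] (v : K → ℝ)
    (hmul : ∀ x y : K, x ≠ 0 → y ≠ 0 → v (x * y) = v x + v y)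
    (hadd : ∀ x y : K, x ≠ 0 → y ≠ 0 → x + y ≠ 0 → min (v x) (v y) ≤ v (x + y))
    (A B : K) (hA : A ≠ 0) (hB : B ≠ 0) (a : ℝ) (ha : 2 ≤ a)
    (hvA : v A = -a) (hvB : v B = -a)
    (hsym : A / B + 1 / B + 1 ≠ 0)
    (hbound : v (A / B + 1 / B + 1) ≤ 0) :
    A + B ≠ 0 ∧ v (A + B) = -a := by
  have h1 : v 1 = 0 := by
    have := hmul 1 1 one_ne_zero one_ne_zero
    rw [one_mul] at this; linarith
  have hBinv : B⁻¹ ≠ 0 := inv_ne_zero hB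
  have hvBinv : v B⁻¹ = a := by
    have := hmul B B⁻¹ hB hBinv
    rw [mul_inv_cancel₀ hB, h1, hvB] at this
    linarith
  have hrw : A / B + 1 / B + 1 = (A + B + 1) * B⁻¹ := by
    field_simp; ring
  have hne : A + B + 1 ≠ 0 := by
    intro h
    apply hsym
    rw [hrw, h, zero_mul]
  have hv1 : v (A + B + 1) ≤ -a := by
    have := hmul (A + B + 1) B⁻¹ hne hBinv
    rw [hrw] at hbound
    rw [this, hvBinv] at hbound
    linarith
  have hAB : A + B ≠ 0 := by
    intro h
    rw [h, zero_add, h1] at hv1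
    linarith
  have hlow : -a ≤ v (A + B) := by
    have := hadd A B hA hB hAB
    rw [hvA, hvB, min_self] at this
    exact this
  have hup : v (A + B) ≤ -a := by
    have h2 := hadd (A + B) 1 hAB one_ne_zero hne
    rw [h1] at h2
    rcases min_le_iff.mp (le_trans h2 hv1) with h | h
    · exact h
    · linarith
  exact ⟨hAB, le_antisymm hup hlow⟩
end

section
/- Let T = conv{(1,1), (2,1), (1,2)} ⊂ ℝ². If P ⊆ conv{(0,0),(4,0),(0,4)} is a lattice polygon containing T that meets each of the three lines i = 0, j = 0, and i + j = 4, and contains at least one of the points (4,0),(3,1),(3,0), at least one of (0,4),(1,3),(0,3), and at least one of (0,0),(1,0),(0,1), then T lies in the interior of P, and the interior lattice points of P are exactly (1,1), (2,1), (1,2). -/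
lemma mem3 {P : Set (ℝ × ℝ)} (hc : Convex ℝ P) {x1 y1 x2 y2 x3 y3 : ℝ}
    (h1 : (x1, y1) ∈ P) (h2 : (x2, y2) ∈ P) (h3 : (x3, y3) ∈ P)
    (w1 w2 w3 : ℝ) (hw1 : 0 ≤ w1) (hw2 : 0 ≤ w2) (hw3 : 0 ≤ w3)
    (hsum : w1 + w2 + w3 = 1) {px py : ℝ}
    (hx : px = w1*x1 + w2*x2 + w3*x3) (hy : py = w1*y1 + w2*y2 + w3*y3) :
    (px, py) ∈ P := by
  rcases eq_or_lt_of_le (by linarith : (0:ℝ) ≤ w2 + w3) with h | h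
  · have hw2' : w2 = 0 := by linarith
    have hw3' : w3 = 0 := by linarith
    have hw1' : w1 = 1 := by linarith
    have e1 : px = x1 := by rw [hx, hw1', hw2', hw3']; ring
    have e2 : py = y1 := by rw [hy, hw1', hw2', hw3']; ring
    rw [e1, e2]; exact h1
  · have hm := hc h2 h3 (div_nonneg hw2 h.le) (div_nonneg hw3 h.le)
      (by field_simp)
    have hp := hc h1 hm hw1 h.le (by linarith)
    convert hp using 1
    simp only [Prod.smul_mk, Prod.mk_add_mk, smul_eq_mul, Prod.mk.injEq]
    constructor
    · rw [hx]; field_simp; ring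
    · rw [hy]; field_simp; ring

lemma boxmem {P : Set (ℝ × ℝ)} (hc : Convex ℝ P) {x y r : ℝ} (hr : 0 < r)
    (h1 : (x - r, y - r) ∈ P) (h2 : (x + r, y - r) ∈ P)
    (h3 : (x - r, y + r) ∈ P) (h4 : (x + r, y + r) ∈ P) :
    (x, y) ∈ interior P := by
  rw [mem_interior]
  refine ⟨Metric.ball (x, y) r, ?_, Metric.isOpen_ball, Metric.mem_ball_self hr⟩
  rintro ⟨px, py⟩ hp
  rw [Metric.mem_ball, Prod.dist_eq, max_lt_iff, Real.dist_eq, Real.dist_eq] at hp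
  obtain ⟨hpx, hpy⟩ := hp
  rw [abs_lt] at hpx hpy
  set α := (px - (x - r)) / (2*r) with hα
  set β := (py - (y - r)) / (2*r) with hβ
  have h2r : (0:ℝ) < 2*r := by linarith
  have hα0 : 0 ≤ α := div_nonneg (by simp at hpx hpy ⊢; linarith) h2r.le
  have hα1 : α ≤ 1 := (div_le_one h2r).mpr (by simp at hpx ⊢; linarith)
  have hβ0 : 0 ≤ β := div_nonneg (by simp at hpy ⊢; linarith) h2r.le
  have hβ1 : β ≤ 1 := (div_le_one h2r).mpr (by simp at hpy ⊢; linarith)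
  have hlow : (px, y - r) ∈ P := by
    refine mem3 hc h1 h2 h1 (1-α) α 0 (by linarith) hα0 (by norm_num) (by ring)
      ?_ (by ring)
    rw [hα]; field_simp; ring
  have hhigh : (px, y + r) ∈ P := by
    refine mem3 hc h3 h4 h3 (1-α) α 0 (by linarith) hα0 (by norm_num) (by ring)
      ?_ (by ring)
    rw [hα]; field_simp; ring
  refine mem3 hc hlow hhigh hlow (1-β) β 0 (by linarith) hβ0 (by norm_num) (by ring)
    (by ring) ?_
  rw [hβ]; field_simp; ring

lemma hpx_convex : Convex ℝ {p : ℝ × ℝ | 0 ≤ p.1} := by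
  intro p hp q hq a b ha hb hab
  simp only [Set.mem_setOf_eq] at *
  have : (a • p + b • q).1 = a * p.1 + b * q.1 := rfl
  rw [this]
  nlinarith [mul_nonneg ha hp, mul_nonneg hb hq]

lemma hpy_convex : Convex ℝ {p : ℝ × ℝ | 0 ≤ p.2} := by
  intro p hp q hq a b ha hb hab
  simp only [Set.mem_setOf_eq] at *
  have : (a • p + b • q).2 = a * p.2 + b * q.2 := rfl
  rw [this]
  nlinarith [mul_nonneg ha hp, mul_nonneg hb hq]

lemma hps_convex : Convex ℝ {p : ℝ × ℝ | p.1 + p.2 ≤ 4} := by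
  intro p hp q hq a b ha hb hab
  simp only [Set.mem_setOf_eq] at *
  have e1 : (a • p + b • q).1 = a * p.1 + b * q.1 := rfl
  have e2 : (a • p + b • q).2 = a * p.2 + b * q.2 := rfl
  rw [e1, e2]
  nlinarith [mul_nonneg ha (by linarith : (0:ℝ) ≤ 4 - (p.1+p.2)),
    mul_nonneg hb (by linarith : (0:ℝ) ≤ 4 - (q.1+q.2))]

lemma delta_x : convexHull ℝ {((0 : ℝ), (0 : ℝ)), (4, 0), (0, 4)} ⊆ {p : ℝ × ℝ | 0 ≤ p.1} := by
  apply convexHull_min _ hpx_convex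
  rintro p hp
  simp only [Set.mem_insert_iff, Set.mem_singleton_iff] at hp
  rcases hp with rfl | rfl | rfl <;> norm_num

lemma delta_y : convexHull ℝ {((0 : ℝ), (0 : ℝ)), (4, 0), (0, 4)} ⊆ {p : ℝ × ℝ | 0 ≤ p.2} := by
  apply convexHull_min _ hpy_convex
  rintro p hp
  simp only [Set.mem_insert_iff, Set.mem_singleton_iff] at hp
  rcases hp with rfl | rfl | rfl <;> norm_num

lemma delta_s : convexHull ℝ {((0 : ℝ), (0 : ℝ)), (4, 0), (0, 4)} ⊆ {p : ℝ × ℝ | p.1 + p.2 ≤ 4} := by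
  apply convexHull_min _ hps_convex
  rintro p hp
  simp only [Set.mem_insert_iff, Set.mem_singleton_iff] at hp
  rcases hp with rfl | rfl | rfl <;> norm_num

/-- Let `T = conv{(1,1), (2,1), (1,2)} ⊂ ℝ²`.  If
`P ⊆ conv{(0,0),(4,0),(0,4)}` is a lattice polygon containing `T` that meets
each of the three lines `i = 0`, `j = 0` and `i + j = 4`, and contains at least
one of the points `(4,0),(3,1),(3,0)`, at least one of `(0,4),(1,3),(0,3)`, and
at least one of `(0,0),(1,0),(0,1)`, then `T` lies in the interior of `P`, and
the interior lattice points of `P` are exactly `(1,1)`, `(2,1)`, `(1,2)`. -/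
theorem stmt18 (F : Finset (ℤ × ℤ)) (P : Set (ℝ × ℝ))
    (hP : P = convexHull ℝ ((fun p : ℤ × ℤ => ((p.1 : ℝ), (p.2 : ℝ))) '' ↑F))
    (hPΔ : P ⊆ convexHull ℝ {((0 : ℝ), (0 : ℝ)), (4, 0), (0, 4)})
    (hT : convexHull ℝ {((1 : ℝ), (1 : ℝ)), (2, 1), (1, 2)} ⊆ P)
    (hlx : (P ∩ {p : ℝ × ℝ | p.1 = 0}).Nonempty)
    (hly : (P ∩ {p : ℝ × ℝ | p.2 = 0}).Nonempty)
    (hlxy : (P ∩ {p : ℝ × ℝ | p.1 + p.2 = 4}).Nonempty)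
    (h1 : ((4 : ℝ), (0 : ℝ)) ∈ P ∨ ((3 : ℝ), (1 : ℝ)) ∈ P ∨ ((3 : ℝ), (0 : ℝ)) ∈ P)
    (h2 : ((0 : ℝ), (4 : ℝ)) ∈ P ∨ ((1 : ℝ), (3 : ℝ)) ∈ P ∨ ((0 : ℝ), (3 : ℝ)) ∈ P)
    (h3 : ((0 : ℝ), (0 : ℝ)) ∈ P ∨ ((1 : ℝ), (0 : ℝ)) ∈ P ∨ ((0 : ℝ), (1 : ℝ)) ∈ P) :
    convexHull ℝ {((1 : ℝ), (1 : ℝ)), (2, 1), (1, 2)} ⊆ interior P ∧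
      ∀ q : ℤ × ℤ, ((q.1 : ℝ), (q.2 : ℝ)) ∈ interior P ↔
        q = (1, 1) ∨ q = (2, 1) ∨ q = (1, 2) := by
  have hconv : Convex ℝ P := hP ▸ convex_convexHull ℝ _
  -- the three vertices of T
  have hv1 : ((1:ℝ), (1:ℝ)) ∈ P := hT (subset_convexHull ℝ _ (by norm_num))
  have hv2 : ((2:ℝ), (1:ℝ)) ∈ P := hT (subset_convexHull ℝ _ (by norm_num))
  have hv3 : ((1:ℝ), (2:ℝ)) ∈ P := hT (subset_convexHull ℝ _ (by norm_num))
  -- point on x = 0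
  obtain ⟨⟨ax, ay⟩, haP, hax⟩ := hlx
  simp only [Set.mem_setOf_eq] at hax
  subst hax
  have hay0 : 0 ≤ ay := delta_y (hPΔ haP)
  have hay4 : ay ≤ 4 := by have := delta_s (hPΔ haP); simpa using this
  -- point on y = 0
  obtain ⟨⟨bx, by'⟩, hbP, hby⟩ := hly
  simp only [Set.mem_setOf_eq] at hby
  subst hby
  have hbx0 : 0 ≤ bx := delta_x (hPΔ hbP)
  have hbx4 : bx ≤ 4 := by have := delta_s (hPΔ hbP); simpa using this
  -- point on x + y = 4
  obtain ⟨⟨cx, cy⟩, hcP, hcs⟩ := hlxy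
  simp only [Set.mem_setOf_eq] at hcs
  have hcx0 : 0 ≤ cx := delta_x (hPΔ hcP)
  have hcy0 : 0 ≤ cy := delta_y (hPΔ hcP)
  have hcx4 : cx ≤ 4 := by linarith
  have hcy4 : cy ≤ 4 := by linarith
  -- the nine auxiliary points of P
  have hA : ((7:ℝ)/8, (7:ℝ)/8) ∈ P := by
    rcases h3 with h | h | h
    · exact mem3 hconv h hv1 hv1 (1/8) (7/8) 0 (by norm_num) (by norm_num)
        (by norm_num) (by norm_num) (by norm_num) (by norm_num)
    · exact mem3 hconv h haP hv3 ((7+ay)/16) (1/8) ((7-ay)/16) (by linarith)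
        (by norm_num) (by linarith) (by ring) (by ring) (by ring)
    · exact mem3 hconv h hbP hv2 ((7+bx)/16) (1/8) ((7-bx)/16) (by linarith)
        (by norm_num) (by linarith) (by ring) (by ring) (by ring)
  have hB : ((1:ℝ), (7:ℝ)/8) ∈ P := by
    rcases h3 with h | h | h
    · exact mem3 hconv h hv2 hv3 (3/8) (3/8) (1/4) (by norm_num) (by norm_num)
        (by norm_num) (by norm_num) (by norm_num) (by norm_num)
    · exact mem3 hconv h hv1 hv1 (1/8) (7/8) 0 (by norm_num) (by norm_num)
        (by norm_num) (by norm_num) (by norm_num) (by norm_num)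
    · exact mem3 hconv h hbP hv2 ((6+bx)/16) (1/8) ((8-bx)/16) (by linarith)
        (by norm_num) (by linarith) (by ring) (by ring) (by ring)
  have hC : ((7:ℝ)/8, (1:ℝ)) ∈ P := by
    rcases h3 with h | h | h
    · exact mem3 hconv h hv3 hv2 (3/8) (3/8) (1/4) (by norm_num) (by norm_num)
        (by norm_num) (by norm_num) (by norm_num) (by norm_num)
    · exact mem3 hconv h haP hv3 ((6+ay)/16) (1/8) ((8-ay)/16) (by linarith)
        (by norm_num) (by linarith) (by ring) (by ring) (by ring)
    · exact mem3 hconv h hv1 hv1 (1/8) (7/8) 0 (by norm_num) (by norm_num)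
        (by norm_num) (by norm_num) (by norm_num) (by norm_num)
  have hD : ((2:ℝ), (7:ℝ)/8) ∈ P := by
    rcases h1 with h | h | h
    · exact mem3 hconv h hv1 hv2 (1/8) (1/4) (5/8) (by norm_num) (by norm_num)
        (by norm_num) (by norm_num) (by norm_num) (by norm_num)
    · exact mem3 hconv hbP h hv1 (1/8) ((9-bx)/16) ((5+bx)/16) (by norm_num)
        (by linarith) (by linarith) (by ring) (by ring) (by ring)
    · exact mem3 hconv h hv1 hv2 (1/8) (1/8) (3/4) (by norm_num) (by norm_num)
        (by norm_num) (by norm_num) (by norm_num) (by norm_num)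
  have hE : ((17:ℝ)/8, (7:ℝ)/8) ∈ P := by
    rcases h1 with h | h | h
    · exact mem3 hconv h hv2 hv1 (1/8) (3/4) (1/8) (by norm_num) (by norm_num)
        (by norm_num) (by norm_num) (by norm_num) (by norm_num)
    · exact mem3 hconv hbP h hv1 (1/8) ((10-bx)/16) ((4+bx)/16) (by norm_num)
        (by linarith) (by linarith) (by ring) (by ring) (by ring)
    · exact mem3 hconv h hv2 hv2 (1/8) (7/8) 0 (by norm_num) (by norm_num)
        (by norm_num) (by norm_num) (by norm_num) (by norm_num)
  have hF : ((17:ℝ)/8, (1:ℝ)) ∈ P := by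
    rcases h1 with h | h | h
    · exact mem3 hconv h hv2 hv3 (1/8) (3/4) (1/8) (by norm_num) (by norm_num)
        (by norm_num) (by norm_num) (by norm_num) (by norm_num)
    · exact mem3 hconv h hv2 hv2 (1/8) (7/8) 0 (by norm_num) (by norm_num)
        (by norm_num) (by norm_num) (by norm_num) (by norm_num)
    · rcases le_total cx 3 with hc3 | hc3
      · exact mem3 hconv h hcP hv2 ((3-cx)/8) (1/8) ((4+cx)/8) (by linarith)
          (by norm_num) (by linarith) (by ring) (by ring) (by linarith)
      · exact mem3 hconv hcP hv2 hv3 (1/8) ((10-cx)/8) ((cx-3)/8) (by norm_num)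
          (by linarith) (by linarith) (by ring) (by ring) (by linarith)
  have hG : ((7:ℝ)/8, (2:ℝ)) ∈ P := by
    rcases h2 with h | h | h
    · exact mem3 hconv h hv1 hv3 (1/8) (1/4) (5/8) (by norm_num) (by norm_num)
        (by norm_num) (by norm_num) (by norm_num) (by norm_num)
    · exact mem3 hconv haP h hv1 (1/8) ((9-ay)/16) ((5+ay)/16) (by norm_num)
        (by linarith) (by linarith) (by ring) (by ring) (by ring)
    · exact mem3 hconv h hv1 hv3 (1/8) (1/8) (3/4) (by norm_num) (by norm_num)
        (by norm_num) (by norm_num) (by norm_num) (by norm_num)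
  have hH : ((7:ℝ)/8, (17:ℝ)/8) ∈ P := by
    rcases h2 with h | h | h
    · exact mem3 hconv h hv3 hv1 (1/8) (3/4) (1/8) (by norm_num) (by norm_num)
        (by norm_num) (by norm_num) (by norm_num) (by norm_num)
    · exact mem3 hconv haP h hv1 (1/8) ((10-ay)/16) ((4+ay)/16) (by norm_num)
        (by linarith) (by linarith) (by ring) (by ring) (by ring)
    · exact mem3 hconv h hv3 hv3 (1/8) (7/8) 0 (by norm_num) (by norm_num)
        (by norm_num) (by norm_num) (by norm_num) (by norm_num)
  have hI : ((1:ℝ), (17:ℝ)/8) ∈ P := by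
    rcases h2 with h | h | h
    · exact mem3 hconv h hv3 hv2 (1/8) (3/4) (1/8) (by norm_num) (by norm_num)
        (by norm_num) (by norm_num) (by norm_num) (by norm_num)
    · exact mem3 hconv h hv3 hv3 (1/8) (7/8) 0 (by norm_num) (by norm_num)
        (by norm_num) (by norm_num) (by norm_num) (by norm_num)
    · rcases le_total cy 3 with hc3 | hc3
      · exact mem3 hconv h hcP hv3 ((3-cy)/8) (1/8) ((4+cy)/8) (by linarith)
          (by norm_num) (by linarith) (by ring) (by linarith) (by ring)
      · exact mem3 hconv hcP hv3 hv2 (1/8) ((10-cy)/8) ((cy-3)/8) (by norm_num)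
          (by linarith) (by linarith) (by ring) (by linarith) (by ring)
  -- three interior points
  have hp1 : ((15:ℝ)/16, (15:ℝ)/16) ∈ interior P := by
    refine boxmem hconv (by norm_num : (0:ℝ) < 1/16) ?_ ?_ ?_ ?_
    · norm_num; exact hA
    · norm_num; exact hB
    · norm_num; exact hC
    · norm_num; exact hv1
  have hp2 : ((33:ℝ)/16, (15:ℝ)/16) ∈ interior P := by
    refine boxmem hconv (by norm_num : (0:ℝ) < 1/16) ?_ ?_ ?_ ?_
    · norm_num; exact hD
    · norm_num; exact hE
    · norm_num; exact hv2
    · norm_num; exact hF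
  have hp3 : ((15:ℝ)/16, (33:ℝ)/16) ∈ interior P := by
    refine boxmem hconv (by norm_num : (0:ℝ) < 1/16) ?_ ?_ ?_ ?_
    · norm_num; exact hG
    · norm_num; exact hv3
    · norm_num; exact hH
    · norm_num; exact hI
  -- the hull of the three interior points lies in the interior
  have hS : convexHull ℝ ({((15:ℝ)/16, (15:ℝ)/16), ((33:ℝ)/16, (15:ℝ)/16),
      ((15:ℝ)/16, (33:ℝ)/16)} : Set (ℝ × ℝ)) ⊆ interior P := by
    apply convexHull_min _ hconv.interior
    rintro p hp
    simp only [Set.mem_insert_iff, Set.mem_singleton_iff] at hp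
    rcases hp with rfl | rfl | rfl
    exacts [hp1, hp2, hp3]
  have hScv : Convex ℝ (convexHull ℝ ({((15:ℝ)/16, (15:ℝ)/16), ((33:ℝ)/16, (15:ℝ)/16),
      ((15:ℝ)/16, (33:ℝ)/16)} : Set (ℝ × ℝ))) := convex_convexHull ℝ _
  have hq1 : ((15:ℝ)/16, (15:ℝ)/16) ∈ convexHull ℝ ({((15:ℝ)/16, (15:ℝ)/16),
      ((33:ℝ)/16, (15:ℝ)/16), ((15:ℝ)/16, (33:ℝ)/16)} : Set (ℝ × ℝ)) :=
    subset_convexHull ℝ _ (by norm_num)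
  have hq2 : ((33:ℝ)/16, (15:ℝ)/16) ∈ convexHull ℝ ({((15:ℝ)/16, (15:ℝ)/16),
      ((33:ℝ)/16, (15:ℝ)/16), ((15:ℝ)/16, (33:ℝ)/16)} : Set (ℝ × ℝ)) :=
    subset_convexHull ℝ _ (by norm_num)
  have hq3 : ((15:ℝ)/16, (33:ℝ)/16) ∈ convexHull ℝ ({((15:ℝ)/16, (15:ℝ)/16),
      ((33:ℝ)/16, (15:ℝ)/16), ((15:ℝ)/16, (33:ℝ)/16)} : Set (ℝ × ℝ)) :=
    subset_convexHull ℝ _ (by norm_num)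
  have hv1i : ((1:ℝ), (1:ℝ)) ∈ interior P :=
    hS (mem3 hScv hq1 hq2 hq3 (16/18) (1/18) (1/18) (by norm_num) (by norm_num)
      (by norm_num) (by norm_num) (by norm_num) (by norm_num))
  have hv2i : ((2:ℝ), (1:ℝ)) ∈ interior P :=
    hS (mem3 hScv hq1 hq2 hq3 0 (17/18) (1/18) (by norm_num) (by norm_num)
      (by norm_num) (by norm_num) (by norm_num) (by norm_num))
  have hv3i : ((1:ℝ), (2:ℝ)) ∈ interior P :=
    hS (mem3 hScv hq1 hq2 hq3 0 (1/18) (17/18) (by norm_num) (by norm_num)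
      (by norm_num) (by norm_num) (by norm_num) (by norm_num))
  have hTint : convexHull ℝ {((1 : ℝ), (1 : ℝ)), (2, 1), (1, 2)} ⊆ interior P := by
    apply convexHull_min _ hconv.interior
    rintro p hp
    simp only [Set.mem_insert_iff, Set.mem_singleton_iff] at hp
    rcases hp with rfl | rfl | rfl
    exacts [hv1i, hv2i, hv3i]
  -- bounds on interior points
  have hbound : ∀ z : ℝ × ℝ, z ∈ interior P → 0 < z.1 ∧ 0 < z.2 ∧ z.1 + z.2 < 4 := by
    intro z hz
    rw [mem_interior_iff_mem_nhds, Metric.mem_nhds_iff] at hz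
    obtain ⟨ε, hε, hball⟩ := hz
    have m1 : (z.1 - ε/2, z.2) ∈ P := by
      apply hball
      rw [Metric.mem_ball, Prod.dist_eq, Real.dist_eq, Real.dist_eq]
      rw [show z.1 - ε/2 - z.1 = -(ε/2) by ring, show z.2 - z.2 = 0 by ring]
      rw [abs_neg, abs_zero, abs_of_nonneg (by linarith : (0:ℝ) ≤ ε/2)]
      rw [max_eq_left (by linarith : (0:ℝ) ≤ ε/2)]
      linarith
    have m2 : (z.1, z.2 - ε/2) ∈ P := by
      apply hball
      rw [Metric.mem_ball, Prod.dist_eq, Real.dist_eq, Real.dist_eq]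
      rw [show z.1 - z.1 = (0:ℝ) by ring, show z.2 - ε/2 - z.2 = -(ε/2) by ring]
      rw [abs_neg, abs_zero, abs_of_nonneg (by linarith : (0:ℝ) ≤ ε/2)]
      rw [max_eq_right (by linarith : (0:ℝ) ≤ ε/2)]
      linarith
    have m3 : (z.1 + ε/4, z.2 + ε/4) ∈ P := by
      apply hball
      rw [Metric.mem_ball, Prod.dist_eq, Real.dist_eq, Real.dist_eq]
      rw [show z.1 + ε/4 - z.1 = ε/4 by ring, show z.2 + ε/4 - z.2 = ε/4 by ring]
      rw [abs_of_nonneg (by linarith : (0:ℝ) ≤ ε/4)]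
      rw [max_self]
      linarith
    have b1 : (0:ℝ) ≤ z.1 - ε/2 := delta_x (hPΔ m1)
    have b2 : (0:ℝ) ≤ z.2 - ε/2 := delta_y (hPΔ m2)
    have b3 : (z.1 + ε/4) + (z.2 + ε/4) ≤ 4 := delta_s (hPΔ m3)
    exact ⟨by linarith, by linarith, by linarith⟩
  refine ⟨hTint, ?_⟩
  rintro ⟨m, n⟩
  constructor
  · intro hq
    obtain ⟨q1, q2, q3⟩ := hbound _ hq
    simp only at q1 q2 q3
    have i1 : 0 < m := by exact_mod_cast q1
    have i2 : 0 < n := by exact_mod_cast q2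
    have i3 : m + n < 4 := by exact_mod_cast (by push_cast; linarith : ((m + n : ℤ) : ℝ) < 4)
    simp only [Prod.mk.injEq]
    omega
  · intro hq
    simp only [Prod.mk.injEq] at hq
    rcases hq with ⟨rfl, rfl⟩ | ⟨rfl, rfl⟩ | ⟨rfl, rfl⟩
    · simpa using hv1i
    · simpa using hv2i
    · simpa using hv3i
end
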